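/- arXiv:2309.01980 — 2 statements merged into one kernel-verified Lean document; each statement's English description precedes it below -/
import Mathlib

section
/- Let x̄ ∈ ℝ^n be an M-stationary point of problem (P) and pick ȳ ∈ Λ(x̄). Assume the qualification condition: whenever u ∈ ℝ^n and η ∈ ℝ^m satisfy 0 = ∇²_{xx}L(x̄, ȳ)u + c'(x̄)^⊤η and η ∈ D(∂g)(c(x̄), ȳ)(c'(x̄)u), then u = 0 and η = 0. Then there exist a constant ρ_u > 0 and a neighborhood U of (x̄, c(x̄), ȳ) such that for every (x, z, y) ∈ U with z ∈ dom g: ‖x − x̄‖ + ‖z − c(x̄)‖ + ‖y − ȳ‖ ≤ ρ_u · Θ(x, z, y). -/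
open Filter Topology Bornology

noncomputable section

/-- Euclidean space `ℝ^d`. -/
abbrev Euc (d : ℕ) := EuclideanSpace ℝ (Fin d)

namespace Paper

variable {n m : ℕ}

/-- The effective domain of an extended-real-valued function. -/
def edom (g : Euc m → EReal) : Set (Euc m) := {z | g z < ⊤}

/-- `g` maps into `ℝ ∪ {∞}` and is proper (its domain is nonempty). -/
def ProperFn (g : Euc m → EReal) : Prop := (∀ z, g z ≠ ⊥) ∧ ∃ z, g z < ⊤

/-- `z ↦ g z + ‖z‖²/(2μ)` is bounded below. -/
def ProxBoundedWith (g : Euc m → EReal) (μ : ℝ) : Prop :=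
  ∃ b : ℝ, ∀ z, (b : EReal) ≤ g z + ((‖z‖ ^ 2 / (2 * μ) : ℝ) : EReal)

/-- `g` is prox-bounded. -/
def ProxBounded (g : Euc m → EReal) : Prop := ∃ μ : ℝ, 0 < μ ∧ ProxBoundedWith g μ

/-- `0 < μ < μ_g`, where `μ_g` is the threshold of prox-boundedness of `g`. -/
def BelowThreshold (g : Euc m → EReal) (μ : ℝ) : Prop :=
  0 < μ ∧ ∃ μ' : ℝ, μ < μ' ∧ ProxBoundedWith g μ'

/-- The tangent cone to `Ω` at `wbar`. -/
def tangentCone {E : Type*} [NormedAddCommGroup E] [NormedSpace ℝ E]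
    (Ω : Set E) (wbar : E) : Set E :=
  {v | ∃ (t : ℕ → ℝ) (w : ℕ → E), (∀ k, 0 < t k) ∧ Tendsto t atTop (𝓝 0) ∧
        Tendsto w atTop (𝓝 v) ∧ ∀ k, wbar + t k • w k ∈ Ω}

/-- The regular (Fréchet) subdifferential of `g` at `zbar`. -/
def regSubdiff (g : Euc m → EReal) (zbar : Euc m) : Set (Euc m) :=
  {v | 0 ≤ liminf (fun z : Euc m =>
      (g z - g zbar - ((inner ℝ v (z - zbar) : ℝ) : EReal)) / ((‖z - zbar‖ : ℝ) : EReal))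
      (𝓝[≠] zbar)}

/-- The limiting (Mordukhovich) subdifferential of `g` at `zbar`. -/
def limSubdiff (g : Euc m → EReal) (zbar : Euc m) : Set (Euc m) :=
  {v | ∃ zs vs : ℕ → Euc m, Tendsto zs atTop (𝓝 zbar) ∧
        Tendsto (fun k => g (zs k)) atTop (𝓝 (g zbar)) ∧
        Tendsto vs atTop (𝓝 v) ∧ ∀ k, vs k ∈ regSubdiff g (zs k)}

/-- The subderivative `dg(zbar)(v)`. -/
def subderiv (g : Euc m → EReal) (zbar v : Euc m) : EReal :=
  liminf (fun p : ℝ × Euc m => (g (zbar + p.1 • p.2) - g zbar) / ((p.1 : ℝ) : EReal))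
    ((𝓝[>] (0 : ℝ)) ×ˢ 𝓝 v)

/-- The second subderivative `d²g(zbar, ybar)(v)`. -/
def secondSubderiv (g : Euc m → EReal) (zbar ybar v : Euc m) : EReal :=
  liminf (fun p : ℝ × Euc m =>
      (g (zbar + p.1 • p.2) - g zbar - ((p.1 * (inner ℝ ybar p.2 : ℝ) : ℝ) : EReal)) /
        ((p.1 ^ 2 / 2 : ℝ) : EReal))
    ((𝓝[>] (0 : ℝ)) ×ˢ 𝓝 v)

/-- The Lagrangian `L(·, y) = f + ⟨y, c ·⟩` of (P). -/
def LagFn (f : Euc n → ℝ) (c : Euc n → Euc m) (y : Euc m) : Euc n → ℝ :=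
  fun x => f x + (inner ℝ y (c x) : ℝ)

/-- `∇ₓL(xbar, y) = 0`. -/
def gradLagZero (f : Euc n → ℝ) (c : Euc n → Euc m) (xbar : Euc n) (y : Euc m) : Prop :=
  fderiv ℝ (LagFn f c y) xbar = 0

/-- The set `Λ(xbar)` of Lagrange multipliers of the M-stationarity system at `xbar`. -/
def Lambda (f : Euc n → ℝ) (c : Euc n → Euc m) (g : Euc m → EReal) (xbar : Euc n) :
    Set (Euc m) :=
  {y | gradLagZero f c xbar y ∧ y ∈ limSubdiff g (c xbar)}

/-- `∇²ₓₓL(xbar, y)[u, w]`. -/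
def hessLag (f : Euc n → ℝ) (c : Euc n → Euc m) (xbar : Euc n) (y : Euc m) (u w : Euc n) : ℝ :=
  iteratedFDeriv ℝ 2 (LagFn f c y) xbar ![u, w]

/-- The critical cone `C(xbar)` of (P). -/
def critCone (f : Euc n → ℝ) (c : Euc n → Euc m) (g : Euc m → EReal) (xbar : Euc n) :
    Set (Euc n) :=
  {u | ((fderiv ℝ f xbar u : ℝ) : EReal) + subderiv g (c xbar) (fderiv ℝ c xbar u) ≤ 0}

/-- The directional multiplier set `Λ(xbar, u)`. -/
def dirLambda (f : Euc n → ℝ) (c : Euc n → Euc m) (g : Euc m → EReal) (xbar : Euc n)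
    (u : Euc n) : Set (Euc m) :=
  {y | gradLagZero f c xbar y ∧
    subderiv g (c xbar) (fderiv ℝ c xbar u) = ((inner ℝ y (fderiv ℝ c xbar u) : ℝ) : EReal) ∧
    secondSubderiv g (c xbar) y (fderiv ℝ c xbar u) ≠ ⊥}

/-- The second-order sufficient condition (SOSC) for (P) at `xbar`. -/
def SOSC (f : Euc n → ℝ) (c : Euc n → Euc m) (g : Euc m → EReal) (xbar : Euc n) : Prop :=
  ∀ u ∈ critCone f c g xbar, u ≠ 0 → ∃ y ∈ dirLambda f c g xbar u,
    0 < ((hessLag f c xbar y u u : ℝ) : EReal) + secondSubderiv g (c xbar) y (fderiv ℝ c xbar u)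

/-- The stationarity residual `Θ(x, z, y)`; the distance to the (possibly empty)
subdifferential is taken in `EReal` via an infimum. -/
def Theta (f : Euc n → ℝ) (c : Euc n → Euc m) (g : Euc m → EReal)
    (x : Euc n) (z y : Euc m) : EReal :=
  ((‖fderiv ℝ (LagFn f c y) x‖ + ‖c x - z‖ : ℝ) : EReal) +
    ⨅ v ∈ limSubdiff g z, ((‖y - v‖ : ℝ) : EReal)

/-- The graphical derivative `D(∂g)(zbar, ybar)(v)` of the limiting subdifferential mapping. -/
def gDeriv (g : Euc m → EReal) (zbar ybar v : Euc m) : Set (Euc m) :=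
  {η | (v, η) ∈ tangentCone {p : Euc m × Euc m | p.2 ∈ limSubdiff g p.1} (zbar, ybar)}

/-- The Moreau envelope `g^μ(w)`. -/
def moreau (g : Euc m → EReal) (μ : ℝ) (w : Euc m) : EReal :=
  ⨅ z, (g z + ((‖z - w‖ ^ 2 / (2 * μ) : ℝ) : EReal))

/-- The augmented Lagrangian `L_μ(x, y)` of (P). -/
def ALfun (f : Euc n → ℝ) (c : Euc n → Euc m) (g : Euc m → EReal) (μ : ℝ)
    (x : Euc n) (y : Euc m) : EReal :=
  (f x : EReal) + moreau g μ (c x + μ • y) - ((μ / 2 * ‖y‖ ^ 2 : ℝ) : EReal)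

/-- `xbar` is a strict local minimizer of (P). -/
def StrictLocalMin (f : Euc n → ℝ) (c : Euc n → Euc m) (g : Euc m → EReal)
    (xbar : Euc n) : Prop :=
  c xbar ∈ edom g ∧ ∃ ρ : ℝ, 0 < ρ ∧ ∀ x : Euc n, ‖x - xbar‖ ≤ ρ → c x ∈ edom g → x ≠ xbar →
    (f xbar : EReal) + g (c xbar) < (f x : EReal) + g (c x)

open Classical in
/-- A sequence generated by the safeguarded implicit augmented Lagrangian method
(Algorithm 4.1) for problem (P). -/
structure ALMSeq (n m : ℕ) (f : Euc n → ℝ) (c : Euc n → Euc m) (g : Euc m → EReal) where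
  /-- sufficient-decrease parameter -/
  θ : ℝ
  /-- penalty-reduction parameter -/
  κ : ℝ
  hθ : 0 < θ ∧ θ < 1
  hκ : 0 < κ ∧ κ < 1
  /-- safeguarding set -/
  Y : Set (Euc m)
  hYne : Y.Nonempty
  hYbdd : IsBounded Y
  /-- primal iterates -/
  x : ℕ → Euc n
  /-- auxiliary (certificate) iterates -/
  z : ℕ → Euc m
  /-- safeguarded multiplier estimates -/
  yhat : ℕ → Euc m
  /-- multiplier iterates -/
  y : ℕ → Euc m
  /-- penalty parameters -/
  μ : ℕ → ℝ
  /-- inner tolerances -/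
  ε : ℕ → ℝ
  hyhatY : ∀ k, yhat k ∈ Y
  hεnn : ∀ k, 0 ≤ ε k
  hμthr : ∀ k, BelowThreshold g (μ k)
  /-- `z k ∈ prox_{μ_k g}(c(x^k) + μ_k ŷ^k)` -/
  hprox : ∀ k, ∀ w : Euc m,
    g (z k) + ((‖z k - (c (x k) + μ k • yhat k)‖ ^ 2 / (2 * μ k) : ℝ) : EReal) ≤
      g w + ((‖w - (c (x k) + μ k • yhat k)‖ ^ 2 / (2 * μ k) : ℝ) : EReal)
  /-- dual update rule -/
  hy : ∀ k, y k = yhat k + (μ k)⁻¹ • (c (x k) - z k)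
  /-- approximate stationarity for the subproblem, `‖∇ₓL^S_{μ_k}(x^k,z^k,ŷ^k)‖ ≤ ε_k` -/
  hdual : ∀ k, ‖fderiv ℝ (LagFn f c (y k)) (x k)‖ ≤ ε k
  /-- penalty update rule -/
  hμupd : ∀ k, μ (k + 1) =
    if k = 0 ∨ ‖c (x k) - z k‖ ≤ θ * ‖c (x (k - 1)) - z (k - 1)‖ then μ k else κ * μ k

open Asymptotics in
lemma helper_diffquot {E F : Type*} [NormedAddCommGroup E] [NormedSpace ℝ E]
    [NormedAddCommGroup F] [NormedSpace ℝ F] {h : E → F} {a : E} {D : E →L[ℝ] F}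
    (hd : HasFDerivAt h D a) {s : ℕ → E} {t : ℕ → ℝ} (ht : ∀ k, 0 < t k)
    (hs : Tendsto s atTop (𝓝 a)) {u : E}
    (hu : Tendsto (fun k => (t k)⁻¹ • (s k - a)) atTop (𝓝 u)) :
    Tendsto (fun k => (t k)⁻¹ • (h (s k) - h a)) atTop (𝓝 (D u)) := by
  have key : ∀ k, (t k)⁻¹ • (h (s k) - h a)
      = (t k)⁻¹ • (h (s k) - h a - D (s k - a)) + D ((t k)⁻¹ • (s k - a)) := by
    intro k; rw [map_smul]; module
  simp only [key]
  have h2 : Tendsto (fun k => D ((t k)⁻¹ • (s k - a))) atTop (𝓝 (D u)) :=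
    (D.continuous.tendsto u).comp hu
  have hM : ∀ᶠ k in atTop, ‖(t k)⁻¹ • (s k - a)‖ ≤ ‖u‖ + 1 :=
    (hu.norm.eventually_lt_const (by linarith [norm_nonneg u])).mono fun k hk => hk.le
  have hlo : (fun k => h (s k) - h a - D (s k - a)) =o[atTop] (fun k => s k - a) :=
    hd.isLittleO.comp_tendsto hs
  have h1 : Tendsto (fun k => (t k)⁻¹ • (h (s k) - h a - D (s k - a))) atTop (𝓝 0) := by
    rw [NormedAddCommGroup.tendsto_nhds_zero]
    intro ε hε
    have hc : (0:ℝ) < ε / (2 * (‖u‖ + 1)) := by positivity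
    filter_upwards [hlo.def hc, hM] with k hk hMk
    have htk := ht k
    have h3 : ‖(t k)⁻¹ • (h (s k) - h a - D (s k - a))‖
        = (t k)⁻¹ * ‖h (s k) - h a - D (s k - a)‖ := by
      rw [norm_smul, Real.norm_eq_abs, abs_of_pos (by positivity)]
    have h4 : ‖s k - a‖ ≤ (‖u‖ + 1) * t k := by
      have := hMk
      rw [norm_smul, Real.norm_eq_abs, abs_of_pos (by positivity)] at this
      calc ‖s k - a‖ = t k * ((t k)⁻¹ * ‖s k - a‖) := by field_simp
        _ ≤ t k * (‖u‖ + 1) := by nlinarith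
        _ = (‖u‖ + 1) * t k := mul_comm _ _
    rw [h3]
    calc (t k)⁻¹ * ‖h (s k) - h a - D (s k - a)‖
        ≤ (t k)⁻¹ * (ε / (2 * (‖u‖ + 1)) * ((‖u‖ + 1) * t k)) := by
          apply mul_le_mul_of_nonneg_left _ (by positivity)
          exact hk.trans (by apply mul_le_mul_of_nonneg_left h4 (by positivity))
      _ = ε / 2 := by field_simp
      _ < ε := by linarith
  have := h1.add h2
  rwa [zero_add] at this

lemma lag_contDiff {f : Euc n → ℝ} {c : Euc n → Euc m}
    (hf : ContDiff ℝ 2 f) (hc : ContDiff ℝ 2 c) (y : Euc m) :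
    ContDiff ℝ 2 (LagFn f c y) := by
  have : ContDiff ℝ 2 (fun x => f x + (innerSL ℝ y) (c x)) :=
    hf.add ((innerSL ℝ y).contDiff.comp hc)
  exact this

lemma lag_hasFDerivAt {f : Euc n → ℝ} {c : Euc n → Euc m}
    (hf : ContDiff ℝ 2 f) (hc : ContDiff ℝ 2 c) (y : Euc m) (x : Euc n) :
    HasFDerivAt (LagFn f c y)
      (fderiv ℝ f x + (innerSL ℝ y).comp (fderiv ℝ c x)) x := by
  have h1 : HasFDerivAt f (fderiv ℝ f x) x :=
    (hf.differentiable (by norm_num) x).hasFDerivAt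
  have h2 : HasFDerivAt c (fderiv ℝ c x) x :=
    (hc.differentiable (by norm_num) x).hasFDerivAt
  have h3 : HasFDerivAt (fun x' => (innerSL ℝ y) (c x'))
      ((innerSL ℝ y).comp (fderiv ℝ c x)) x := (innerSL ℝ y).hasFDerivAt.comp x h2
  have := h1.add h3
  exact this

lemma lag_fderiv_eq {f : Euc n → ℝ} {c : Euc n → Euc m}
    (hf : ContDiff ℝ 2 f) (hc : ContDiff ℝ 2 c) (ybar y : Euc m) (x : Euc n) :
    fderiv ℝ (LagFn f c y) x =
      fderiv ℝ (LagFn f c ybar) x + (innerSL ℝ (y - ybar)).comp (fderiv ℝ c x) := by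
  rw [(lag_hasFDerivAt hf hc y x).fderiv, (lag_hasFDerivAt hf hc ybar x).fderiv]
  ext w
  simp [inner_sub_left]

set_option maxHeartbeats 1000000 in
theorem statement8 {n m : ℕ}
    (f : Euc n → ℝ) (c : Euc n → Euc m) (g : Euc m → EReal)
    (hf : ContDiff ℝ 2 f) (hc : ContDiff ℝ 2 c)
    (hgp : ProperFn g) (hglsc : LowerSemicontinuous g) (hgpb : ProxBounded g)
    (hphi : ∃ r : ℝ, (⨅ x : Euc n, ((f x : EReal) + g (c x))) = (r : EReal))
    (xbar : Euc n) (ybar : Euc m) (hybar : ybar ∈ Lambda f c g xbar)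
    (hqc : ∀ (u : Euc n) (η : Euc m),
      (∀ w : Euc n, hessLag f c xbar ybar u w + (inner ℝ η (fderiv ℝ c xbar w) : ℝ) = 0) →
      η ∈ gDeriv g (c xbar) ybar (fderiv ℝ c xbar u) → u = 0 ∧ η = 0) :
    ∃ ρ : ℝ, 0 < ρ ∧ ∃ U ∈ 𝓝 ((xbar, c xbar, ybar) : Euc n × Euc m × Euc m),
      ∀ (x : Euc n) (z y : Euc m), (x, z, y) ∈ U → z ∈ edom g →
        ((‖x - xbar‖ + ‖z - c xbar‖ + ‖y - ybar‖ : ℝ) : EReal) ≤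
          (ρ : EReal) * Theta f c g x z y := by
  classical
  obtain ⟨hgrad0, hysub⟩ := hybar
  by_contra hcon
  push_neg at hcon
  have key : ∀ k : ℕ, ∃ x z y,
      (x, z, y) ∈ Metric.ball ((xbar, c xbar, ybar) : Euc n × Euc m × Euc m) (1/((k:ℝ)+1)) ∧
      z ∈ edom g ∧
      (((k:ℝ)+1 : ℝ) : EReal) * Theta f c g x z y <
        ((‖x - xbar‖ + ‖z - c xbar‖ + ‖y - ybar‖ : ℝ) : EReal) := fun k =>
    hcon ((k:ℝ)+1) (by positivity) _ (Metric.ball_mem_nhds _ (by positivity))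
  choose X Z Y hmem hdom hlt using key
  set r : ℕ → ℝ := fun k => ‖X k - xbar‖ + ‖Z k - c xbar‖ + ‖Y k - ybar‖ with hr_def
  set a : ℕ → ℝ := fun k => ‖fderiv ℝ (LagFn f c (Y k)) (X k)‖ + ‖c (X k) - Z k‖ with ha_def
  have ha0 : ∀ k, 0 ≤ a k := fun k => by positivity
  have hinf0 : ∀ k, (0 : EReal) ≤ ⨅ v ∈ limSubdiff g (Z k), ((‖Y k - v‖ : ℝ) : EReal) :=
    fun k => le_iInf fun v => le_iInf fun _ => by exact_mod_cast norm_nonneg _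
  have hThe : ∀ k, Theta f c g (X k) (Z k) (Y k)
      = ((a k : ℝ) : EReal) + ⨅ v ∈ limSubdiff g (Z k), ((‖Y k - v‖ : ℝ) : EReal) :=
    fun k => rfl
  have hinfne : ∀ k, (⨅ v ∈ limSubdiff g (Z k), ((‖Y k - v‖ : ℝ) : EReal)) ≠ ⊤ := by
    intro k hTop
    have h1 : Theta f c g (X k) (Z k) (Y k) = ⊤ := by
      rw [hThe k, hTop, EReal.coe_add_top]
    have h2 := hlt k
    rw [h1, EReal.mul_top_of_pos (by exact_mod_cast (by positivity : (0:ℝ) < (k:ℝ)+1))] at h2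
    exact not_top_lt h2
  set d : ℕ → ℝ := fun k => (⨅ v ∈ limSubdiff g (Z k), ((‖Y k - v‖ : ℝ) : EReal)).toReal
    with hd_def
  have hdeq : ∀ k, (⨅ v ∈ limSubdiff g (Z k), ((‖Y k - v‖ : ℝ) : EReal)) = ((d k : ℝ) : EReal) := by
    intro k
    exact (EReal.coe_toReal (hinfne k)
      ((lt_of_lt_of_le (by simp : (⊥:EReal) < 0) (hinf0 k)).ne')).symm
  have hd0 : ∀ k, 0 ≤ d k := by
    intro k
    have := hinf0 k
    rw [hdeq k] at this
    exact_mod_cast this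
  have hreal : ∀ k : ℕ, ((k:ℝ)+1) * (a k + d k) < r k := by
    intro k
    have h2 := hlt k
    rw [hThe k, hdeq k, ← EReal.coe_add, ← EReal.coe_mul] at h2
    exact_mod_cast h2
  have hrpos : ∀ k, 0 < r k := by
    intro k
    have h1 := hreal k
    have h2 := ha0 k
    have h3 := hd0 k
    nlinarith [Nat.cast_nonneg (α := ℝ) k]
  have hak : ∀ k : ℕ, a k < r k / ((k:ℝ)+1) := by
    intro k
    rw [lt_div_iff₀ (by positivity)]
    nlinarith [hreal k, hd0 k, Nat.cast_nonneg (α := ℝ) k, ha0 k]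
  have hdk : ∀ k : ℕ, d k < r k / ((k:ℝ)+1) := by
    intro k
    rw [lt_div_iff₀ (by positivity)]
    nlinarith [hreal k, hd0 k, Nat.cast_nonneg (α := ℝ) k, ha0 k]
  have hVex : ∀ k : ℕ, ∃ v ∈ limSubdiff g (Z k), ‖Y k - v‖ < r k / ((k:ℝ)+1) := by
    intro k
    have h1 : (⨅ v ∈ limSubdiff g (Z k), ((‖Y k - v‖ : ℝ) : EReal))
        < ((r k / ((k:ℝ)+1) : ℝ) : EReal) := by
      rw [hdeq k]; exact_mod_cast hdk k
    obtain ⟨v, hv⟩ := iInf_lt_iff.mp h1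
    obtain ⟨hvmem, hvlt⟩ := iInf_lt_iff.mp hv
    exact ⟨v, hvmem, by exact_mod_cast hvlt⟩
  choose V hVmem hVlt using hVex
  -- distance bounds from ball membership
  have hdX : ∀ k : ℕ, dist (X k) xbar < 1/((k:ℝ)+1) := by
    intro k
    have h := hmem k
    rw [Metric.mem_ball, Prod.dist_eq] at h
    exact lt_of_le_of_lt (le_max_left _ _) h
  have hdZ : ∀ k : ℕ, dist (Z k) (c xbar) < 1/((k:ℝ)+1) := by
    intro k
    have h := hmem k
    rw [Metric.mem_ball, Prod.dist_eq, Prod.dist_eq] at h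
    exact lt_of_le_of_lt ((le_max_left _ _).trans (le_max_right _ _)) h
  have hdY : ∀ k : ℕ, dist (Y k) ybar < 1/((k:ℝ)+1) := by
    intro k
    have h := hmem k
    rw [Metric.mem_ball, Prod.dist_eq, Prod.dist_eq] at h
    exact lt_of_le_of_lt ((le_max_right _ _).trans (le_max_right _ _)) h
  have hone : Tendsto (fun k : ℕ => 1/((k:ℝ)+1)) atTop (𝓝 0) :=
    tendsto_one_div_add_atTop_nhds_zero_nat
  have hXlim : Tendsto X atTop (𝓝 xbar) := by
    refine tendsto_iff_dist_tendsto_zero.mpr ?_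
    exact squeeze_zero (fun k => dist_nonneg) (fun k => (hdX k).le) hone
  have hrlim : Tendsto r atTop (𝓝 0) := by
    refine squeeze_zero (fun k => (hrpos k).le) (fun k => ?_) (by simpa using hone.const_mul 3)
    have h1 := (hdX k).le
    have h2 := (hdZ k).le
    have h3 := (hdY k).le
    rw [dist_eq_norm] at h1 h2 h3
    simp only [hr_def, one_div] at h1 h2 h3 ⊢
    linarith
  -- normalized sequences
  set u : ℕ → Euc n := fun k => (r k)⁻¹ • (X k - xbar) with hu_def
  set ζ : ℕ → Euc m := fun k => (r k)⁻¹ • (Z k - c xbar) with hζ_def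
  set w : ℕ → Euc m := fun k => (r k)⁻¹ • (Y k - ybar) with hw_def
  have hsum : ∀ k, ‖u k‖ + ‖ζ k‖ + ‖w k‖ = 1 := by
    intro k
    simp only [hu_def, hζ_def, hw_def, norm_smul, Real.norm_eq_abs, abs_inv,
      abs_of_pos (hrpos k)]
    have h0 : (r k)⁻¹ * ‖X k - xbar‖ + (r k)⁻¹ * ‖Z k - c xbar‖ + (r k)⁻¹ * ‖Y k - ybar‖
        = (r k)⁻¹ * r k := by rw [hr_def]; ring
    rw [h0, inv_mul_cancel₀ (hrpos k).ne']
  set q : ℕ → Euc n × Euc m × Euc m := fun k => (u k, ζ k, w k) with hq_def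
  have hqmem : ∀ k, q k ∈ Metric.closedBall (0 : Euc n × Euc m × Euc m) 1 := by
    intro k
    rw [Metric.mem_closedBall, dist_zero_right, Prod.norm_def, Prod.norm_def]
    have h := hsum k
    have n1 := norm_nonneg (u k)
    have n2 := norm_nonneg (ζ k)
    have n3 := norm_nonneg (w k)
    exact max_le (by linarith) (max_le (by linarith) (by linarith))
  obtain ⟨L, hLmem, φ, hφmono, hφlim⟩ :=
    (isCompact_closedBall (0 : Euc n × Euc m × Euc m) 1).tendsto_subseq hqmem
  have hulim : Tendsto (fun j => u (φ j)) atTop (𝓝 L.1) :=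
    (continuous_fst.tendsto L).comp hφlim
  have hζlim : Tendsto (fun j => ζ (φ j)) atTop (𝓝 L.2.1) :=
    (continuous_fst.tendsto L.2).comp ((continuous_snd.tendsto L).comp hφlim)
  have hwlim : Tendsto (fun j => w (φ j)) atTop (𝓝 L.2.2) :=
    (continuous_snd.tendsto L.2).comp ((continuous_snd.tendsto L).comp hφlim)
  have hrφlim : Tendsto (fun j => r (φ j)) atTop (𝓝 0) :=
    hrlim.comp hφmono.tendsto_atTop
  have hXφlim : Tendsto (fun j => X (φ j)) atTop (𝓝 xbar) :=
    hXlim.comp hφmono.tendsto_atTop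
  have honeφ : Tendsto (fun j : ℕ => 1/((φ j : ℝ)+1)) atTop (𝓝 0) :=
    squeeze_zero (fun j => by positivity)
      (fun j => by
        have hj : (j:ℝ) ≤ (φ j : ℝ) := Nat.cast_le.mpr hφmono.le_apply
        exact one_div_le_one_div_of_le (by positivity) (by linarith))
      hone
  -- limit of norms sum is one
  have hsumlim : ‖L.1‖ + ‖L.2.1‖ + ‖L.2.2‖ = 1 := by
    have h1 : Tendsto (fun j => ‖u (φ j)‖ + ‖ζ (φ j)‖ + ‖w (φ j)‖) atTop
        (𝓝 (‖L.1‖ + ‖L.2.1‖ + ‖L.2.2‖)) := (hulim.norm.add hζlim.norm).add hwlim.norm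
    have h2 : (fun j => ‖u (φ j)‖ + ‖ζ (φ j)‖ + ‖w (φ j)‖) = fun _ => (1:ℝ) :=
      funext fun j => hsum (φ j)
    rw [h2] at h1
    exact tendsto_nhds_unique h1 tendsto_const_nhds
  -- ζ limit equals c'(xbar) L.1
  have hcquot : Tendsto (fun j => (r (φ j))⁻¹ • (c (X (φ j)) - c xbar)) atTop
      (𝓝 (fderiv ℝ c xbar L.1)) :=
    helper_diffquot ((hc.differentiable (by norm_num) xbar).hasFDerivAt)
      (fun j => hrpos (φ j)) hXφlim hulim
  have hgen0 : ∀ (b : ℕ → ℝ), (∀ j, 0 ≤ b j) → (∀ j, b j < 1/((φ j : ℝ)+1)) →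
      Tendsto b atTop (𝓝 0) :=
    fun b hb0 hble => squeeze_zero hb0 (fun j => (hble j).le) honeφ
  have hzerr : Tendsto (fun j => (r (φ j))⁻¹ • (Z (φ j) - c (X (φ j)))) atTop (𝓝 0) := by
    apply squeeze_zero_norm (fun j => ?_) honeφ
    have h1 : ‖(r (φ j))⁻¹ • (Z (φ j) - c (X (φ j)))‖
        = (r (φ j))⁻¹ * ‖c (X (φ j)) - Z (φ j)‖ := by
      rw [norm_smul, Real.norm_eq_abs, abs_inv, abs_of_pos (hrpos (φ j)), norm_sub_rev]
    rw [h1]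
    have h2 : ‖c (X (φ j)) - Z (φ j)‖ ≤ a (φ j) := by
      simp only [ha_def]; have := norm_nonneg (fderiv ℝ (LagFn f c (Y (φ j))) (X (φ j))); linarith
    have h3 := (hak (φ j)).le
    have h4 := (hrpos (φ j))
    calc (r (φ j))⁻¹ * ‖c (X (φ j)) - Z (φ j)‖ ≤ (r (φ j))⁻¹ * (r (φ j) / ((φ j:ℝ)+1)) := by
          apply mul_le_mul_of_nonneg_left (h2.trans h3) (by positivity)
      _ = 1/((φ j:ℝ)+1) := by
            rw [div_eq_mul_one_div, ← mul_assoc, inv_mul_cancel₀ (hrpos (φ j)).ne', one_mul]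
  have hζlim2 : Tendsto (fun j => ζ (φ j)) atTop (𝓝 (0 + fderiv ℝ c xbar L.1)) := by
    have hfe : (fun j => ζ (φ j)) = fun j =>
        (r (φ j))⁻¹ • (Z (φ j) - c (X (φ j))) + (r (φ j))⁻¹ • (c (X (φ j)) - c xbar) := by
      funext j
      rw [hζ_def]
      simp only
      rw [← smul_add, sub_add_sub_cancel]
    rw [hfe]
    exact hzerr.add hcquot
  have hζeq : L.2.1 = fderiv ℝ c xbar L.1 := by
    rw [zero_add] at hζlim2
    exact tendsto_nhds_unique hζlim hζlim2
  -- graphical derivative membership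
  have hηmem : L.2.2 ∈ gDeriv g (c xbar) ybar (fderiv ℝ c xbar L.1) := by
    have hverr : Tendsto (fun j => (r (φ j))⁻¹ • (V (φ j) - Y (φ j))) atTop (𝓝 0) := by
      apply squeeze_zero_norm (fun j => ?_) honeφ
      have h1 : ‖(r (φ j))⁻¹ • (V (φ j) - Y (φ j))‖
          = (r (φ j))⁻¹ * ‖Y (φ j) - V (φ j)‖ := by
        rw [norm_smul, Real.norm_eq_abs, abs_inv, abs_of_pos (hrpos (φ j)), norm_sub_rev]
      rw [h1]
      have h3 := (hVlt (φ j)).le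
      calc (r (φ j))⁻¹ * ‖Y (φ j) - V (φ j)‖ ≤ (r (φ j))⁻¹ * (r (φ j) / ((φ j:ℝ)+1)) := by
            apply mul_le_mul_of_nonneg_left h3 (by positivity)
        _ = 1/((φ j:ℝ)+1) := by
            rw [div_eq_mul_one_div, ← mul_assoc, inv_mul_cancel₀ (hrpos (φ j)).ne', one_mul]
    refine ⟨fun j => r (φ j),
      fun j => (ζ (φ j), (r (φ j))⁻¹ • (V (φ j) - ybar)),
      fun j => hrpos (φ j), hrφlim, ?_, ?_⟩
    · apply Tendsto.prodMk_nhds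
      · rw [← hζeq]; exact hζlim
      · have hfe : (fun j => (r (φ j))⁻¹ • (V (φ j) - ybar)) = fun j =>
            (r (φ j))⁻¹ • (V (φ j) - Y (φ j)) + w (φ j) := by
          funext j
          rw [hw_def]
          simp only
          rw [← smul_add, sub_add_sub_cancel]
        rw [hfe]
        simpa using hverr.add hwlim
    · intro j
      have e1 : c xbar + r (φ j) • ζ (φ j) = Z (φ j) := by
        rw [hζ_def]
        simp only
        rw [smul_inv_smul₀ (hrpos (φ j)).ne', add_sub_cancel]
      have e2 : ybar + r (φ j) • ((r (φ j))⁻¹ • (V (φ j) - ybar)) = V (φ j) := by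
        rw [smul_inv_smul₀ (hrpos (φ j)).ne', add_sub_cancel]
      show (ybar + r (φ j) • ((r (φ j))⁻¹ • (V (φ j) - ybar)))
          ∈ limSubdiff g (c xbar + r (φ j) • ζ (φ j))
      rw [e1, e2]
      exact hVmem (φ j)
  -- Hessian equation
  have hH1 : ContDiff ℝ 1 (fderiv ℝ (LagFn f c ybar)) :=
    (lag_contDiff hf hc ybar).fderiv_right (by norm_num)
  have hHd : HasFDerivAt (fderiv ℝ (LagFn f c ybar))
      (fderiv ℝ (fderiv ℝ (LagFn f c ybar)) xbar) xbar :=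
    (hH1.differentiable (by norm_num) xbar).hasFDerivAt
  have hH0 : fderiv ℝ (LagFn f c ybar) xbar = 0 := hgrad0
  have hterm1 : Tendsto (fun j => (r (φ j))⁻¹ •
      (fderiv ℝ (LagFn f c ybar) (X (φ j)) - fderiv ℝ (LagFn f c ybar) xbar)) atTop
      (𝓝 (fderiv ℝ (fderiv ℝ (LagFn f c ybar)) xbar L.1)) :=
    helper_diffquot hHd (fun j => hrpos (φ j)) hXφlim hulim
  have hterm2 : Tendsto (fun j => (innerSL ℝ (w (φ j))).comp (fderiv ℝ c (X (φ j)))) atTop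
      (𝓝 ((innerSL ℝ L.2.2).comp (fderiv ℝ c xbar))) := by
    have hfd : Tendsto (fun j => fderiv ℝ c (X (φ j))) atTop (𝓝 (fderiv ℝ c xbar)) :=
      ((hc.continuous_fderiv (by norm_num)).tendsto _).comp hXφlim
    have hA : Tendsto (fun j => innerSL ℝ (w (φ j))) atTop (𝓝 (innerSL ℝ L.2.2)) :=
      ((innerSL ℝ).continuous.tendsto L.2.2).comp hwlim
    have hA2 : Tendsto
        (fun j => ContinuousLinearMap.compL ℝ (Euc n) (Euc m) ℝ (innerSL ℝ (w (φ j))))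
        atTop (𝓝 (ContinuousLinearMap.compL ℝ (Euc n) (Euc m) ℝ (innerSL ℝ L.2.2))) :=
      (((ContinuousLinearMap.compL ℝ (Euc n) (Euc m) ℝ)).continuous.tendsto _).comp hA
    have happ : Continuous (fun p :
        ((Euc n →L[ℝ] Euc m) →L[ℝ] (Euc n →L[ℝ] ℝ)) × (Euc n →L[ℝ] Euc m) => p.1 p.2) :=
      isBoundedBilinearMap_apply.continuous
    exact (happ.tendsto _).comp (hA2.prodMk_nhds hfd)
  have hFeq : ∀ k, (r k)⁻¹ • (fderiv ℝ (LagFn f c (Y k)) (X k))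
      = (r k)⁻¹ • (fderiv ℝ (LagFn f c ybar) (X k) - fderiv ℝ (LagFn f c ybar) xbar)
        + (innerSL ℝ (w k)).comp (fderiv ℝ c (X k)) := by
    intro k
    rw [lag_fderiv_eq hf hc ybar (Y k) (X k), hH0, sub_zero, smul_add]
    congr 1
    ext v
    rw [hw_def]
    simp [real_inner_smul_left]
  have hFlim0 : Tendsto (fun j => (r (φ j))⁻¹ •
      (fderiv ℝ (LagFn f c (Y (φ j))) (X (φ j)))) atTop (𝓝 0) := by
    apply squeeze_zero_norm (fun j => ?_) honeφ
    have h1 : ‖(r (φ j))⁻¹ • fderiv ℝ (LagFn f c (Y (φ j))) (X (φ j))‖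
        = (r (φ j))⁻¹ * ‖fderiv ℝ (LagFn f c (Y (φ j))) (X (φ j))‖ := by
      rw [norm_smul, Real.norm_eq_abs, abs_inv, abs_of_pos (hrpos (φ j))]
    rw [h1]
    have h2 : ‖fderiv ℝ (LagFn f c (Y (φ j))) (X (φ j))‖ ≤ a (φ j) := by
      simp only [ha_def]; have := norm_nonneg (c (X (φ j)) - Z (φ j)); linarith
    have h3 := (hak (φ j)).le
    calc (r (φ j))⁻¹ * ‖fderiv ℝ (LagFn f c (Y (φ j))) (X (φ j))‖
        ≤ (r (φ j))⁻¹ * (r (φ j) / ((φ j:ℝ)+1)) := by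
          apply mul_le_mul_of_nonneg_left (h2.trans h3) (by positivity)
      _ = 1/((φ j:ℝ)+1) := by
            rw [div_eq_mul_one_div, ← mul_assoc, inv_mul_cancel₀ (hrpos (φ j)).ne', one_mul]
  have hkey : fderiv ℝ (fderiv ℝ (LagFn f c ybar)) xbar L.1
      + (innerSL ℝ L.2.2).comp (fderiv ℝ c xbar) = 0 := by
    have h1 := hterm1.add hterm2
    have h2 : (fun j => (r (φ j))⁻¹ •
        (fderiv ℝ (LagFn f c ybar) (X (φ j)) - fderiv ℝ (LagFn f c ybar) xbar)
        + (innerSL ℝ (w (φ j))).comp (fderiv ℝ c (X (φ j))))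
        = fun j => (r (φ j))⁻¹ • (fderiv ℝ (LagFn f c (Y (φ j))) (X (φ j))) :=
      funext fun j => (hFeq (φ j)).symm
    rw [h2] at h1
    exact (tendsto_nhds_unique h1 hFlim0)
  have hlag : ∀ w' : Euc n, hessLag f c xbar ybar L.1 w'
      + (inner ℝ L.2.2 (fderiv ℝ c xbar w') : ℝ) = 0 := by
    intro w'
    have happ := congrArg (fun T : Euc n →L[ℝ] ℝ => T w') hkey
    simp only [ContinuousLinearMap.add_apply, ContinuousLinearMap.comp_apply,
      ContinuousLinearMap.zero_apply, innerSL_apply_apply] at happ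
    have hhess : hessLag f c xbar ybar L.1 w'
        = fderiv ℝ (fderiv ℝ (LagFn f c ybar)) xbar L.1 w' := by
      rw [hessLag, iteratedFDeriv_two_apply]
      simp
    rw [hhess]
    exact happ
  obtain ⟨hu0, hη0⟩ := hqc L.1 L.2.2 hlag hηmem
  rw [hu0] at hζeq
  rw [map_zero] at hζeq
  rw [hu0, hη0, hζeq] at hsumlim
  simp at hsumlim

end Paper
end
end

section
/- Let x̄ ∈ ℝ^n be an M-stationary point of problem (P) and fix ȳ ∈ Λ(x̄). If D(∂g)(c(x̄), ȳ)(0) ∩ ker c'(x̄)^⊤ = {0}, then there exists a neighborhood V ⊆ ℝ^m of ȳ such that Λ(x̄) ∩ V = {ȳ}. In particular, if Λ(x̄) is convex, then Λ(x̄) = {ȳ}. -/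
open Filter Topology Bornology

noncomputable section

namespace Paper

variable {n m : ℕ}

lemma lag_fderiv_apply {n m : ℕ} (f : Euc n → ℝ) (c : Euc n → Euc m)
    (hf : ContDiff ℝ 2 f) (hc : ContDiff ℝ 2 c) (y : Euc m) (xbar : Euc n) (u : Euc n) :
    fderiv ℝ (LagFn f c y) xbar u
      = fderiv ℝ f xbar u + (inner ℝ y (fderiv ℝ c xbar u) : ℝ) := by
  have hfd : DifferentiableAt ℝ f xbar := (hf.differentiable (by norm_num)).differentiableAt
  have hcd : DifferentiableAt ℝ c xbar := (hc.differentiable (by norm_num)).differentiableAt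
  have h1 : HasFDerivAt (fun x => (inner ℝ y (c x) : ℝ))
      ((innerSL ℝ y).comp (fderiv ℝ c xbar)) xbar :=
    (innerSL ℝ y).hasFDerivAt.comp xbar hcd.hasFDerivAt
  have h2 : HasFDerivAt (LagFn f c y)
      (fderiv ℝ f xbar + (innerSL ℝ y).comp (fderiv ℝ c xbar)) xbar :=
    hfd.hasFDerivAt.add h1
  rw [h2.fderiv]
  rfl

lemma multiplier_ker {n m : ℕ} (f : Euc n → ℝ) (c : Euc n → Euc m)
    (hf : ContDiff ℝ 2 f) (hc : ContDiff ℝ 2 c) (xbar : Euc n) (y ybar : Euc m)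
    (hy : gradLagZero f c xbar y) (hyb : gradLagZero f c xbar ybar) (u : Euc n) :
    (inner ℝ (y - ybar) (fderiv ℝ c xbar u) : ℝ) = 0 := by
  have h1 := lag_fderiv_apply f c hf hc y xbar u
  have h2 := lag_fderiv_apply f c hf hc ybar xbar u
  rw [hy] at h1; rw [hyb] at h2
  simp only [ContinuousLinearMap.zero_apply] at h1 h2
  rw [inner_sub_left]
  linarith

theorem statement10 {n m : ℕ}
    (f : Euc n → ℝ) (c : Euc n → Euc m) (g : Euc m → EReal)
    (hf : ContDiff ℝ 2 f) (hc : ContDiff ℝ 2 c)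
    (hgp : ProperFn g) (hglsc : LowerSemicontinuous g) (hgpb : ProxBounded g)
    (hphi : ∃ r : ℝ, (⨅ x : Euc n, ((f x : EReal) + g (c x))) = (r : EReal))
    (xbar : Euc n) (ybar : Euc m) (hybar : ybar ∈ Lambda f c g xbar)
    (hcq : gDeriv g (c xbar) ybar 0 ∩
        {η : Euc m | ∀ u : Euc n, (inner ℝ η (fderiv ℝ c xbar u) : ℝ) = 0} = {0}) :
    (∃ V ∈ 𝓝 ybar, Lambda f c g xbar ∩ V = {ybar}) ∧
      (Convex ℝ (Lambda f c g xbar) → Lambda f c g xbar = {ybar}) := by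
  have key : ∃ V ∈ 𝓝 ybar, Lambda f c g xbar ∩ V = {ybar} := by
    by_contra hcon
    push_neg at hcon
    have hseq : ∀ k : ℕ, ∃ y, y ∈ Lambda f c g xbar ∧
        y ∈ Metric.ball ybar (1 / (k + 1)) ∧ y ≠ ybar := by
      intro k
      have hball : Metric.ball ybar (1 / (k + 1 : ℝ)) ∈ 𝓝 ybar :=
        Metric.ball_mem_nhds _ (by positivity)
      have hne := hcon _ hball
      by_contra h
      push_neg at h
      apply hne
      ext z
      simp only [Set.mem_inter_iff, Set.mem_singleton_iff]
      constructor
      · rintro ⟨hz1, hz2⟩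
        exact h z hz1 hz2
      · rintro rfl
        exact ⟨hybar, Metric.mem_ball_self (by positivity)⟩
    choose y hyL hyb hyne using hseq
    set t : ℕ → ℝ := fun k => ‖y k - ybar‖ with ht
    have htpos : ∀ k, 0 < t k := fun k =>
      norm_pos_iff.mpr (sub_ne_zero.mpr (hyne k))
    have ht0 : Tendsto t atTop (𝓝 0) := by
      apply squeeze_zero (fun k => (htpos k).le) (fun k => ?_)
        tendsto_one_div_add_atTop_nhds_zero_nat
      have := hyb k
      rw [Metric.mem_ball, dist_eq_norm] at this
      exact this.le
    set η : ℕ → Euc m := fun k => (t k)⁻¹ • (y k - ybar) with hη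
    have hηsph : ∀ k, η k ∈ Metric.sphere (0 : Euc m) 1 := by
      intro k
      rw [mem_sphere_zero_iff_norm, hη]
      rw [norm_smul, norm_inv, Real.norm_eq_abs, abs_of_pos (htpos k)]
      exact inv_mul_cancel₀ (htpos k).ne'
    obtain ⟨ηl, hηl, ψ, hψmono, hψt⟩ :=
      (isCompact_sphere (0 : Euc m) 1).tendsto_subseq hηsph
    have hmem : ηl ∈ gDeriv g (c xbar) ybar 0 ∩
        {η : Euc m | ∀ u : Euc n, (inner ℝ η (fderiv ℝ c xbar u) : ℝ) = 0} := by
      constructor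
      · refine ⟨t ∘ ψ, fun k => ((0 : Euc m), η (ψ k)), fun k => htpos (ψ k),
          ht0.comp hψmono.tendsto_atTop, ?_, ?_⟩
        · exact (tendsto_const_nhds.prodMk_nhds hψt)
        · intro k
          have hr : (c xbar, ybar) + (t ∘ ψ) k • ((0 : Euc m), η (ψ k))
              = (c xbar, y (ψ k)) := by
            have : ybar + t (ψ k) • η (ψ k) = y (ψ k) := by
              rw [hη]
              rw [smul_inv_smul₀ (htpos (ψ k)).ne']
              abel
            simp [Prod.ext_iff, this]
          rw [hr]
          exact (hyL (ψ k)).2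
      · intro u
        have hconst : ∀ k, (inner ℝ (η (ψ k)) (fderiv ℝ c xbar u) : ℝ) = 0 := by
          intro k
          rw [hη]
          rw [real_inner_smul_left]
          rw [multiplier_ker f c hf hc xbar (y (ψ k)) ybar (hyL (ψ k)).1 hybar.1 u]
          ring
        have hcontlim : Tendsto (fun k => (inner ℝ (η (ψ k)) (fderiv ℝ c xbar u) : ℝ))
            atTop (𝓝 (inner ℝ ηl (fderiv ℝ c xbar u) : ℝ)) :=
          ((continuous_inner.comp (Continuous.prodMk continuous_id
            continuous_const)).tendsto ηl).comp hψt
        have : Tendsto (fun _ : ℕ => (0 : ℝ)) atTop (𝓝 (inner ℝ ηl (fderiv ℝ c xbar u) : ℝ)) := by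
          simpa [hconst] using hcontlim
        exact (tendsto_nhds_unique tendsto_const_nhds this).symm
    rw [hcq] at hmem
    rw [Set.mem_singleton_iff] at hmem
    rw [hmem, mem_sphere_zero_iff_norm] at hηl
    simp at hηl
  refine ⟨key, fun hconv => ?_⟩
  obtain ⟨V, hV, hVeq⟩ := key
  apply Set.eq_singleton_iff_unique_mem.mpr
  refine ⟨hybar, fun z hz => ?_⟩
  by_contra hzne
  obtain ⟨ε, hε, hball⟩ := Metric.mem_nhds_iff.mp hV
  have hd : 0 < ‖z - ybar‖ := norm_pos_iff.mpr (sub_ne_zero.mpr hzne)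
  set s : ℝ := min (1 / 2) (ε / (2 * ‖z - ybar‖)) with hs
  have hs0 : 0 < s := lt_min (by norm_num) (by positivity)
  have hs1 : s ≤ 1 := le_trans (min_le_left _ _) (by norm_num)
  have hwmem : (1 - s) • ybar + s • z ∈ Lambda f c g xbar :=
    hconv hybar hz (by linarith) hs0.le (by ring)
  set w : Euc m := (1 - s) • ybar + s • z with hw
  have hwy : w - ybar = s • (z - ybar) := by
    rw [hw]; module
  have hwV : w ∈ V := by
    apply hball
    rw [Metric.mem_ball, dist_eq_norm, hwy, norm_smul, Real.norm_eq_abs,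
      abs_of_pos hs0]
    calc s * ‖z - ybar‖ ≤ (ε / (2 * ‖z - ybar‖)) * ‖z - ybar‖ := by
          apply mul_le_mul_of_nonneg_right (min_le_right _ _) hd.le
      _ = ε / 2 := by field_simp
      _ < ε := by linarith
  have : w ∈ Lambda f c g xbar ∩ V := ⟨hwmem, hwV⟩
  rw [hVeq, Set.mem_singleton_iff] at this
  rw [this] at hwy
  simp only [sub_self] at hwy
  have := hwy.symm
  rw [smul_eq_zero] at this
  rcases this with h | h
  · exact hs0.ne' h
  · exact hzne (sub_eq_zero.mp h ▸ rfl)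


end Paper
end
end
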